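/- Let g₁,…,g_N ∈ R^d with ||gᵢ|| ≤ G, and let ḡ_t = (1/N)Σᵢ Clip(gᵢ, C) and g_t = (1/N)Σᵢ gᵢ. Then ⟨g_t, ḡ_t⟩ ≥ ||g_t||² − ||g_t||·P(C)·G, where P(C) is the fraction of indices with ||gᵢ|| > C. -/

import Mathlib

noncomputable def clip {d : ℕ} (g : EuclideanSpace ℝ (Fin d)) (C : ℝ) : EuclideanSpace ℝ (Fin d) :=
  (max 1 (‖g‖ / C))⁻¹ • g

theorem inner_product_lower_bound {d N : ℕ} (hN : 0 < N) (G C : ℝ) (hC : 0 < C)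
    (g : Fin N → EuclideanSpace ℝ (Fin d)) (hG : ∀ i, ‖g i‖ ≤ G)
    (gt gbar : EuclideanSpace ℝ (Fin d))
    (hgt : gt = (1 / (N : ℝ)) • ∑ i, g i)
    (hgbar : gbar = (1 / (N : ℝ)) • ∑ i, clip (g i) C) :
    (inner ℝ gt gbar : ℝ) ≥
      ‖gt‖ ^ 2 - ‖gt‖ * ((((Finset.univ.filter fun i => C < ‖g i‖).card : ℝ) / N) * G) := by
  have hG0 : 0 ≤ G := le_trans (norm_nonneg _) (hG ⟨0, hN⟩)
  have hNpos : (0:ℝ) < N := Nat.cast_pos.mpr hN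
  set K : ℝ := ((Finset.univ.filter fun i => C < ‖g i‖).card : ℝ) with hK
  have hterm : ∀ i, ‖clip (g i) C - g i‖ ≤ if C < ‖g i‖ then G else 0 := by
    intro i
    by_cases h : C < ‖g i‖
    · simp only [if_pos h]
      have hm : (1:ℝ) ≤ max 1 (‖g i‖ / C) := le_max_left _ _
      have heq : clip (g i) C - g i = ((max 1 (‖g i‖ / C))⁻¹ - 1) • g i := by
        simp [clip, sub_smul]
      rw [heq, norm_smul]
      have h0 : (0:ℝ) < (max 1 (‖g i‖ / C))⁻¹ := by positivity
      have h1 : (max 1 (‖g i‖ / C))⁻¹ ≤ 1 := inv_le_one_of_one_le₀ hm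
      have habs : ‖(max 1 (‖g i‖ / C))⁻¹ - 1‖ ≤ 1 := by
        rw [Real.norm_eq_abs, abs_le]; constructor <;> linarith
      calc ‖(max 1 (‖g i‖ / C))⁻¹ - 1‖ * ‖g i‖ ≤ 1 * ‖g i‖ :=
            mul_le_mul_of_nonneg_right habs (norm_nonneg _)
        _ = ‖g i‖ := one_mul _
        _ ≤ G := hG i
    · simp only [if_neg h]
      have hle : ‖g i‖ / C ≤ 1 := div_le_one_of_le₀ (not_lt.mp h) hC.le
      have : max 1 (‖g i‖ / C) = 1 := max_eq_left hle
      simp [clip, this]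
  have hdiff : ‖gbar - gt‖ ≤ K / N * G := by
    rw [hgbar, hgt, ← smul_sub, ← Finset.sum_sub_distrib, norm_smul]
    have hcalc : ‖∑ i, (clip (g i) C - g i)‖ ≤ K * G := by
      calc ‖∑ i, (clip (g i) C - g i)‖ ≤ ∑ i, ‖clip (g i) C - g i‖ :=
            norm_sum_le _ _
        _ ≤ ∑ i, (if C < ‖g i‖ then G else 0) := Finset.sum_le_sum fun i _ => hterm i
        _ = ∑ i ∈ Finset.univ.filter (fun i => C < ‖g i‖), G := (Finset.sum_filter _ _).symm
        _ = K * G := by rw [Finset.sum_const, nsmul_eq_mul]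
    have hn : ‖(1 / (N:ℝ))‖ = 1 / N := by
      rw [Real.norm_eq_abs, abs_of_pos (by positivity)]
    rw [hn]
    calc 1 / (N:ℝ) * ‖∑ i, (clip (g i) C - g i)‖ ≤ 1 / N * (K * G) := by
          apply mul_le_mul_of_nonneg_left hcalc (by positivity)
      _ = K / N * G := by ring
  have key : (inner ℝ gt gbar : ℝ) = ‖gt‖^2 + inner ℝ gt (gbar - gt) := by
    rw [inner_sub_right, real_inner_self_eq_norm_sq]; ring
  have habs2 : |(inner ℝ gt (gbar - gt) : ℝ)| ≤ ‖gt‖ * (K / N * G) := by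
    calc |(inner ℝ gt (gbar - gt) : ℝ)| ≤ ‖gt‖ * ‖gbar - gt‖ := abs_real_inner_le_norm _ _
      _ ≤ ‖gt‖ * (K / N * G) := mul_le_mul_of_nonneg_left hdiff (norm_nonneg _)
  have := neg_abs_le (inner ℝ gt (gbar - gt) : ℝ)
  rw [key]
  linarith
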